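/- Let β be an algebraic number with |β| > 1 and degree at least 2, such that every algebraic conjugate of β has modulus ≥ 1. Then β has no conjugate of modulus exactly 1; consequently β is expanding, i.e., every conjugate of β has modulus strictly greater than 1. -/

import Mathlib

noncomputable section

theorem stmt10 (β : ℂ) (hβ : 1 < ‖β‖) (hβalg : IsAlgebraic ℚ β)
    (hdeg : 2 ≤ (minpoly ℚ β).natDegree)
    (hconj : ∀ γ : ℂ, Polynomial.aeval γ (minpoly ℚ β) = 0 → 1 ≤ ‖γ‖) :
    ∀ γ : ℂ, Polynomial.aeval γ (minpoly ℚ β) = 0 → 1 < ‖γ‖ := by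
  intro γ hγ
  rcases lt_or_eq_of_le (hconj γ hγ) with h | h
  · exact h
  exfalso
  set p := minpoly ℚ β with hp
  have hβ0 : β ≠ 0 := by
    intro h0; rw [h0] at hβ; simp at hβ; linarith
  have hγabs : ‖γ‖ = 1 := h.symm
  have hγ0 : γ ≠ 0 := by
    intro h0; rw [h0] at hγabs; simp at hγabs
  have hirr : Irreducible p := minpoly.irreducible hβalg.isIntegral
  have hmonic : p.Monic := minpoly.monic hβalg.isIntegral
  have hp0 : p ≠ 0 := hmonic.ne_zero
  -- conjugate of γ is a root
  have hconjγ : (Polynomial.aeval (starRingEnd ℂ γ) p) = 0 := by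
    have := congrArg (starRingEnd ℂ) hγ
    rw [Polynomial.aeval_def, Polynomial.hom_eval₂] at this
    rw [Polynomial.aeval_def]
    convert this using 2
    · ext q
      simp [Complex.conj_ofReal]
    · simp
  -- conj γ = γ⁻¹
  have hinv : (starRingEnd ℂ) γ = γ⁻¹ := by
    rw [Complex.inv_def]
    rw [Complex.normSq_eq_norm_sq, hγabs]
    simp
  have hγinv : Polynomial.aeval γ⁻¹ p = 0 := hinv ▸ hconjγ
  -- γ is a root of reverse p
  haveI : Invertible γ := invertibleOfNonzero hγ0
  have hrev : Polynomial.aeval γ p.reverse = 0 := by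
    haveI : Invertible γ⁻¹ := invertibleOfNonzero (inv_ne_zero hγ0)
    rw [Polynomial.aeval_def]
    have hinv2 : (⅟ γ⁻¹ : ℂ) = γ := by
      rw [invOf_eq_inv, inv_inv]
    rw [← hinv2]
    rw [Polynomial.eval₂_reverse_eq_zero_iff]
    rw [← Polynomial.aeval_def]
    exact hγinv
  -- minpoly of γ equals p
  have hminγ : minpoly ℚ γ = p := by
    symm
    apply minpoly.eq_of_irreducible_of_monic hirr hγ hmonic
  -- p divides reverse p
  have hrev0 : p.reverse ≠ 0 := fun h0 => hp0 (Polynomial.reverse_eq_zero.mp h0)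
  have hdvd : p ∣ p.reverse := by
    have := minpoly.dvd ℚ γ hrev
    rwa [hminγ] at this
  obtain ⟨r, hr⟩ := hdvd
  have hr0 : r ≠ 0 := by rintro rfl; rw [mul_zero] at hr; exact hrev0 hr
  have hdegr : r.natDegree = 0 := by
    have h1 : p.reverse.natDegree ≤ p.natDegree := p.reverse_natDegree_le
    have h2 : p.reverse.natDegree = p.natDegree + r.natDegree := by
      rw [hr, Polynomial.natDegree_mul hp0 hr0]
    omega
  obtain ⟨c, hc⟩ := Polynomial.natDegree_eq_zero.mp hdegr
  have hc0 : c ≠ 0 := by rintro rfl; simp at hc; exact hr0 hc.symm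
  -- β⁻¹ is a root of reverse p, hence of p
  haveI : Invertible β := invertibleOfNonzero hβ0
  have hβrev : Polynomial.aeval β⁻¹ p.reverse = 0 := by
    have hinv2 : (⅟ β : ℂ) = β⁻¹ := invOf_eq_inv β
    rw [← hinv2, Polynomial.aeval_def, Polynomial.eval₂_reverse_eq_zero_iff,
      ← Polynomial.aeval_def]
    exact hγ ▸ (minpoly.aeval ℚ β)
  have hβinv : Polynomial.aeval (β⁻¹ : ℂ) p = 0 := by
    rw [hr, ← hc] at hβrev
    simp only [map_mul, Polynomial.aeval_C] at hβrev
    rcases mul_eq_zero.mp hβrev with h1 | h1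
    · exact h1
    · exact absurd h1 (by simpa using hc0)
  have := hconj β⁻¹ hβinv
  rw [norm_inv] at this
  have : ‖β‖ ≤ 1 := by
    rw [le_inv_comm₀ (by positivity) (by linarith)] at this
    simpa using this
  linarith
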